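/- Let H be a left-invariant σ-ideal of subsets of G (gM ∈ H for all g ∈ G and M ∈ H), and let U_+(H) be the family of universally measurable subsets of G not belonging to H. If U_+(H) has the Steinhaus–Weil property (for every E ∈ U_+(H), 1_G is an interior point of EE⁻¹), then U_+(H) has the Kemperman property: for every E ∈ U_+(H) there exists δ > 0 such that E ∩ tE ∈ U_+(H) (in particular E ∩ tE ∉ H) for all t with ‖t‖ < δ. -/

import Mathlib

open Set Topology TopologicalSpace MeasureTheory Filter Pointwise

/-- If `𝓗` is a left-invariant `σ`-ideal on `G` and the family `U_+(𝓗)` of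
universally measurable sets not in `𝓗` has the Steinhaus–Weil property, then
`U_+(𝓗)` has the Kemperman property: for `E ∈ U_+(𝓗)` there is `δ > 0` with
`E ∩ tE ∈ U_+(𝓗)` for all `‖t‖ < δ`. -/
theorem stmt_16 {G : Type*} [Group G] [MetricSpace G] [IsTopologicalGroup G]
    [MeasurableSpace G] [BorelSpace G]
    (hd : ∀ x y z : G, dist (x * z) (y * z) = dist x y)
    (𝓗 : Set (Set G)) (hempty : ∅ ∈ 𝓗)
    (hmono : ∀ s t : Set G, s ⊆ t → t ∈ 𝓗 → s ∈ 𝓗)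
    (hunion : ∀ f : ℕ → Set G, (∀ n, f n ∈ 𝓗) → (⋃ n, f n) ∈ 𝓗)
    (hinv : ∀ (g : G) (M : Set G), M ∈ 𝓗 → (g * ·) '' M ∈ 𝓗)
    (hSW : ∀ E : Set G,
      (∀ μ : Measure G, IsProbabilityMeasure μ → NullMeasurableSet E μ) →
      E ∉ 𝓗 → (1 : G) ∈ interior (E * E⁻¹)) :
    ∀ E : Set G,
      (∀ μ : Measure G, IsProbabilityMeasure μ → NullMeasurableSet E μ) →
      E ∉ 𝓗 →
      ∃ δ > (0 : ℝ), ∀ t : G, dist (1 : G) t < δ →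
        (∀ μ : Measure G, IsProbabilityMeasure μ →
          NullMeasurableSet (E ∩ (t * ·) '' E) μ) ∧
        (E ∩ (t * ·) '' E) ∉ 𝓗 := by
  intro E hE hEH
  -- translates of universally measurable sets are universally measurable
  have htrans : ∀ (t : G) (μ : Measure G), IsProbabilityMeasure μ →
      NullMeasurableSet ((t * ·) '' E) μ := by
    intro t μ hμ
    have himg : (t * ·) '' E = (t⁻¹ * ·) ⁻¹' E := by
      ext x
      simp only [Set.mem_image, Set.mem_preimage]
      constructor
      · rintro ⟨a, ha, rfl⟩; simpa using ha
      · intro h; exact ⟨t⁻¹ * x, h, by simp⟩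
    rw [himg]
    have hf : Measurable (fun x : G => t⁻¹ * x) := measurable_const_mul _
    have hprob : IsProbabilityMeasure (μ.map (fun x : G => t⁻¹ * x)) :=
      Measure.isProbabilityMeasure_map hf.aemeasurable
    exact (hE _ hprob).preimage ⟨hf, Measure.AbsolutelyContinuous.rfl⟩
  have hmeas : ∀ t : G, ∀ μ : Measure G, IsProbabilityMeasure μ →
      NullMeasurableSet (E ∩ (t * ·) '' E) μ := fun t μ hμ =>
    (hE μ hμ).inter (htrans t μ hμ)
  by_contra hcon
  push_neg at hcon
  -- for each n, get t n with small norm and bad intersection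
  have key : ∀ n : ℕ, ∃ t : G, dist (1 : G) t < 1 / (n + 1) ∧
      (E ∩ (t * ·) '' E) ∈ 𝓗 := by
    intro n
    obtain ⟨t, ht, hbad⟩ := hcon (1 / (n + 1)) (by positivity)
    exact ⟨t, ht, hbad (hmeas t)⟩
  choose t ht hbad using key
  set S : Set G := ⋃ n, E ∩ ((t n) * ·) '' E with hS
  have hSH : S ∈ 𝓗 := hunion _ hbad
  set F : Set G := E \ S with hF
  have hFH : F ∉ 𝓗 := by
    intro h
    apply hEH
    have : E ⊆ ⋃ n, (fun n => if n = 0 then F else S) n := by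
      intro x hx
      by_cases hxS : x ∈ S
      · exact Set.mem_iUnion.2 ⟨1, by simp [hxS]⟩
      · exact Set.mem_iUnion.2 ⟨0, by simp [hF, hx, hxS]⟩
    refine hmono _ _ this (hunion _ ?_)
    intro n
    by_cases hn : n = 0 <;> simp [hn, h, hSH]
  have hFmeas : ∀ μ : Measure G, IsProbabilityMeasure μ → NullMeasurableSet F μ := by
    intro μ hμ
    exact (hE μ hμ).diff (NullMeasurableSet.iUnion fun n => hmeas (t n) μ hμ)
  have h1 := hSW F hFmeas hFH
  rw [mem_interior_iff_mem_nhds, Metric.mem_nhds_iff] at h1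
  obtain ⟨ε, hε, hball⟩ := h1
  obtain ⟨n, hn⟩ := exists_nat_one_div_lt hε
  have htn : t n ∈ F * F⁻¹ := by
    apply hball
    rw [Metric.mem_ball, dist_comm]
    exact lt_trans (ht n) hn
  obtain ⟨a, ha, b, hb, hab⟩ := htn
  rw [Set.mem_inv] at hb
  have haE : a ∈ E := ha.1
  have haT : a ∈ (t n * ·) '' E := by
    refine ⟨b⁻¹, hb.1, ?_⟩
    simp only
    rw [← hab, mul_assoc, mul_inv_cancel, mul_one]
  exact ha.2 (Set.mem_iUnion.2 ⟨n, haE, haT⟩)
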